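/- Savings trick: for every supermartingale M with M(λ) > 1, there exists a supermartingale N with N(λ) = M(λ) such that for every infinite binary sequence X with limsup_n M(X↾n) = ∞, the savings satisfy lim_n S_N(X↾n) = ∞. -/

import Mathlib

open Filter Finset

/-- A (deterministic) martingale on binary strings. -/
def IsMartingale (M : List Bool → ℝ) : Prop :=
  (∀ σ, 0 ≤ M σ) ∧ ∀ σ, 2 * M σ = M (σ ++ [false]) + M (σ ++ [true])

/-- A supermartingale on binary strings. -/
def IsSupermartingale (M : List Bool → ℝ) : Prop :=
  (∀ σ, 0 ≤ M σ) ∧ ∀ σ, M (σ ++ [false]) + M (σ ++ [true]) ≤ 2 * M σ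

/-- The wager of a (super)martingale at σ. -/
noncomputable def wager (M : List Bool → ℝ) (σ : List Bool) : ℝ :=
  (M (σ ++ [true]) - M (σ ++ [false])) / 2

/-- The cover of a supermartingale: the martingale with the same initial
capital and the same wagers. -/
noncomputable def cover (M : List Bool → ℝ) (σ : List Bool) : ℝ :=
  M [] + ∑ i ∈ Finset.range σ.length,
    (if σ.getD i false then wager M (σ.take i) else -wager M (σ.take i))

/-- The savings of a supermartingale at σ. -/
noncomputable def savings (M : List Bool → ℝ) (σ : List Bool) : ℝ := cover M σ - M σ

/-- The length-`n` prefix of an infinite binary sequence. -/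
def pre (X : ℕ → Bool) (n : ℕ) : List Bool := (List.range n).map X

/-- `M` is `g`-granular: each wager at σ is an integer multiple of `2^{-g(|σ|+1)}`. -/
def GranularWagers (g : ℕ → ℕ) (M : List Bool → ℝ) : Prop :=
  ∀ σ, ∃ k : ℤ, wager M σ = k * (2:ℝ) ^ (-(g (σ.length + 1) : ℤ))

lemma savings_append (M : List Bool → ℝ) (σ : List Bool) (b : Bool) :
    savings M (σ ++ [b]) = savings M σ +
      (M σ - (M (σ ++ [false]) + M (σ ++ [true])) / 2) := by
  have hcov : cover M (σ ++ [b]) = cover M σ +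
      (if b then wager M σ else - wager M σ) := by
    unfold cover
    rw [List.length_append, List.length_singleton, Finset.sum_range_succ]
    have h1 : ∀ i ∈ Finset.range σ.length,
        (if (σ ++ [b]).getD i false then wager M ((σ ++ [b]).take i)
          else -wager M ((σ ++ [b]).take i)) =
        (if σ.getD i false then wager M (σ.take i) else -wager M (σ.take i)) := by
      intro i hi
      rw [Finset.mem_range] at hi
      rw [List.getD_append _ _ _ _ hi, List.take_append_of_le_length hi.le]
    rw [Finset.sum_congr rfl h1]
    have h2 : (σ ++ [b]).getD σ.length false = b := by
      rw [List.getD_append_right _ _ _ _ le_rfl]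
      simp
    have h3 : (σ ++ [b]).take σ.length = σ := List.take_left
    rw [h2, h3]; ring
  unfold savings
  rw [hcov]
  cases b <;> simp [wager] <;> ring

open Classical in
noncomputable def kR (M : List Bool → ℝ) : List Bool → ℕ
  | [] => 0
  | b :: τ => if 2 ≤ (1/2:ℝ) ^ (kR M τ) * M ((b :: τ).reverse) then kR M τ + 1 else kR M τ

noncomputable def kk (M : List Bool → ℝ) (σ : List Bool) : ℕ := kR M σ.reverse
noncomputable def cc (M : List Bool → ℝ) (σ : List Bool) : ℝ := (1/2) ^ (kk M σ)
noncomputable def NN (M : List Bool → ℝ) (σ : List Bool) : ℝ := cc M σ * M σ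

lemma kk_nil (M : List Bool → ℝ) : kk M [] = 0 := rfl

lemma kk_append (M : List Bool → ℝ) (σ : List Bool) (b : Bool) :
    kk M (σ ++ [b]) = if 2 ≤ cc M σ * M (σ ++ [b]) then kk M σ + 1 else kk M σ := by
  unfold kk cc kk
  rw [List.reverse_append]
  show kR M (b :: σ.reverse) = _
  rw [kR]
  simp

lemma cc_pos (M : List Bool → ℝ) (σ : List Bool) : 0 < cc M σ := by
  unfold cc; positivity

lemma cc_append_le (M : List Bool → ℝ) (σ : List Bool) (b : Bool) :
    cc M (σ ++ [b]) ≤ cc M σ := by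
  unfold cc
  rw [kk_append]
  split_ifs with h
  · exact pow_le_pow_of_le_one (by norm_num) (by norm_num) (Nat.le_succ _)
  · rfl

section
variable (M : List Bool → ℝ) (hM0 : ∀ σ, 0 ≤ M σ)
  (hMs : ∀ σ, M (σ ++ [false]) + M (σ ++ [true]) ≤ 2 * M σ)

include hM0 in
lemma NN_child_le (σ : List Bool) (b : Bool) :
    NN M (σ ++ [b]) ≤ cc M σ * M (σ ++ [b]) :=
  mul_le_mul_of_nonneg_right (cc_append_le M σ b) (hM0 _)

include hM0 hMs in
lemma NN_super (σ : List Bool) :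
    NN M (σ ++ [false]) + NN M (σ ++ [true]) ≤ 2 * NN M σ := by
  have h0 := NN_child_le M hM0 σ false
  have h1 := NN_child_le M hM0 σ true
  have hc := (cc_pos M σ).le
  have := mul_le_mul_of_nonneg_left (hMs σ) hc
  unfold NN at *
  nlinarith

include hM0 hMs in
lemma NN_bound (σ : List Bool) : NN M σ ≤ max (M []) 2 := by
  induction σ using List.reverseRecOn with
  | nil =>
      unfold NN cc
      rw [kk_nil]
      simpa using le_max_left _ _
  | append_singleton σ b ih =>
      have hM2 : M (σ ++ [b]) ≤ 2 * M σ := by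
        have := hMs σ
        cases b <;> nlinarith [hM0 (σ ++ [false]), hM0 (σ ++ [true])]
      unfold NN cc
      rw [kk_append]
      split_ifs with h
      · have : (1/2:ℝ) ^ (kk M σ + 1) * M (σ ++ [b]) ≤ (1/2)^(kk M σ) * M σ := by
          rw [pow_succ]
          have hc := (cc_pos M σ).le
          unfold cc at hc
          nlinarith
        calc (1/2:ℝ) ^ (kk M σ + 1) * M (σ ++ [b]) ≤ (1/2)^(kk M σ) * M σ := this
          _ = NN M σ := rfl
          _ ≤ _ := ih
      · push_neg at h
        unfold cc at h
        exact le_trans h.le (le_max_right _ _)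

include hM0 hMs in
lemma slack_ge (σ : List Bool) (b : Bool) (h : 2 ≤ cc M σ * M (σ ++ [b])) :
    (1:ℝ)/2 ≤ NN M σ - (NN M (σ ++ [false]) + NN M (σ ++ [true])) / 2 := by
  have hb : NN M (σ ++ [b]) = (cc M σ / 2) * M (σ ++ [b]) := by
    unfold NN cc
    rw [kk_append, if_pos]
    · rw [pow_succ]; ring
    · exact h
  have hnb : NN M (σ ++ [!b]) ≤ cc M σ * M (σ ++ [!b]) := NN_child_le M hM0 σ _
  have hc := (cc_pos M σ).le
  have hsum := mul_le_mul_of_nonneg_left (hMs σ) hc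
  cases b <;>
    simp only [Bool.not_true, Bool.not_false] at hnb <;>
    unfold NN at hb hnb ⊢ <;>
    nlinarith [h, hb, hnb, hsum]

end

lemma pre_succ (X : ℕ → Bool) (n : ℕ) : pre X (n + 1) = pre X n ++ [X n] := by
  simp [pre, List.range_succ]

/-- Savings trick: any supermartingale with initial capital above 1 can be turned into a
supermartingale with the same initial capital whose savings tend to infinity along every
sequence where the original succeeds. -/
theorem savings_trick (M : List Bool → ℝ) (hM : IsSupermartingale M) (h1 : 1 < M []) :
    ∃ N : List Bool → ℝ, IsSupermartingale N ∧ N [] = M [] ∧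
      ∀ X : ℕ → Bool,
        (∀ C : ℝ, ∃ᶠ n in atTop, C < M (pre X n)) →
        Tendsto (fun n => savings N (pre X n)) atTop atTop := by
  obtain ⟨hM0, hMs⟩ := hM
  refine ⟨NN M, ⟨fun σ => mul_nonneg (cc_pos M σ).le (hM0 σ), NN_super M hM0 hMs⟩, ?_, ?_⟩
  · unfold NN cc; rw [kk_nil]; simp
  intro X hX
  set f : ℕ → ℝ := fun n => savings (NN M) (pre X n) with hf
  have hstep : ∀ n, f (n + 1) = f n +
      (NN M (pre X n) - (NN M (pre X n ++ [false]) + NN M (pre X n ++ [true])) / 2) := by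
    intro n
    simp only [hf, pre_succ]
    exact savings_append (NN M) (pre X n) (X n)
  have hd : ∀ σ, 0 ≤ NN M σ - (NN M (σ ++ [false]) + NN M (σ ++ [true])) / 2 := by
    intro σ; have := NN_super M hM0 hMs σ; linarith
  have hmono : Monotone f := by
    apply monotone_nat_of_le_succ
    intro n; rw [hstep n]; linarith [hd (pre X n)]
  have hf0 : f 0 = 0 := by
    simp [hf, pre, savings, cover]
  -- f n ≥ kk (pre X n) / 2
  have hfk : ∀ n, (kk M (pre X n) : ℝ) / 2 ≤ f n := by
    intro n
    induction n with
    | zero => rw [hf0]; simp [pre, kk_nil]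
    | succ n ih =>
        rw [hstep n]
        rw [pre_succ, kk_append]
        split_ifs with h
        · have := slack_ge M hM0 hMs (pre X n) (X n) h
          push_cast
          linarith
        · linarith [hd (pre X n)]
  -- kk unbounded along X
  have hkub : ∀ K : ℕ, ∃ n, K ≤ kk M (pre X n) := by
    intro K
    by_contra hcon
    push_neg at hcon
    set B := max (M []) 2 with hB
    have hBpos : (0:ℝ) ≤ B := le_trans (by norm_num) (le_max_right _ _)
    obtain ⟨n, hn⟩ := (hX (B * 2 ^ K)).exists
    have hcc : ((1:ℝ)/2) ^ K ≤ cc M (pre X n) := by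
      unfold cc
      exact pow_le_pow_of_le_one (by norm_num) (by norm_num) (hcon n).le
    have hb := NN_bound M hM0 hMs (pre X n)
    unfold NN at hb
    have : ((1:ℝ)/2) ^ K * M (pre X n) ≤ B :=
      le_trans (mul_le_mul_of_nonneg_right hcc (hM0 _)) hb
    have hpow : (0:ℝ) < 2 ^ K := by positivity
    have h3 : ((1:ℝ)/2) ^ K * M (pre X n) * 2 ^ K ≤ B * 2 ^ K :=
      mul_le_mul_of_nonneg_right this hpow.le
    have h4 : ((1:ℝ)/2) ^ K * M (pre X n) * 2 ^ K = M (pre X n) := by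
      rw [one_div, inv_pow]; field_simp
    rw [h4] at h3
    linarith
  -- conclude
  apply tendsto_atTop_atTop_of_monotone hmono
  intro C
  obtain ⟨K, hK⟩ := exists_nat_ge (2 * C)
  obtain ⟨n, hn⟩ := hkub K
  refine ⟨n, ?_⟩
  have := hfk n
  have hcast : (K:ℝ) ≤ (kk M (pre X n) : ℝ) := by exact_mod_cast hn
  linarith
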